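/- (Closed form of the edge update.) The pair (a*, b*) given by a* = α·x + (1−α)·z and b* = α·z + (1−α)·x is the unique minimizer of G over ℝ^m × ℝ^m. -/

import Mathlib

open Finset Filter

noncomputable section

namespace Paper

/-- The edge-update objective `G(a,b)`. -/
def Gedge (m : ℕ) (lam rho : ℝ) (x z a b : Fin m → ℝ) : ℝ :=
  lam * ∑ t, (a t - b t) ^ 2 + rho / 2 * ((∑ t, (x t - a t) ^ 2) + ∑ t, (z t - b t) ^ 2)

lemma key_pt (lam rho x z a b : ℝ) (h : 4 * lam + rho ≠ 0) :
    let α : ℝ := (2 * lam + rho) / (4 * lam + rho)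
    let A : ℝ := α * x + (1 - α) * z
    let B : ℝ := α * z + (1 - α) * x
    lam * (a - b) ^ 2 + rho / 2 * ((x - a) ^ 2 + (z - b) ^ 2) =
      (lam * (A - B) ^ 2 + rho / 2 * ((x - A) ^ 2 + (z - B) ^ 2)) +
      (lam * ((a - A) - (b - B)) ^ 2 + rho / 2 * ((a - A) ^ 2 + (b - B) ^ 2)) := by
  intro α A B
  simp only [α, A, B]
  have h' : lam * 4 + rho ≠ 0 := by rwa [mul_comm]
  field_simp
  ring

theorem stmt17 (m : ℕ) (hm : 1 ≤ m) (lam rho : ℝ) (hlam : 0 < lam) (hrho : 0 < rho)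
    (x z : Fin m → ℝ) :
    let α : ℝ := (2 * lam + rho) / (4 * lam + rho)
    let astar : Fin m → ℝ := fun t => α * x t + (1 - α) * z t
    let bstar : Fin m → ℝ := fun t => α * z t + (1 - α) * x t
    ∀ a b : Fin m → ℝ, (a, b) ≠ (astar, bstar) →
      Gedge m lam rho x z astar bstar < Gedge m lam rho x z a b := by
  intro α astar bstar a b hne
  have hden : 4 * lam + rho ≠ 0 := by positivity
  have hG : ∀ A B : Fin m → ℝ, Gedge m lam rho x z A B =
      ∑ t, (lam * (A t - B t) ^ 2 + rho / 2 * ((x t - A t) ^ 2 + (z t - B t) ^ 2)) := by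
    intro A B
    simp only [Gedge, Finset.mul_sum, ← Finset.sum_add_distrib, mul_add]
  have hsum : Gedge m lam rho x z a b = Gedge m lam rho x z astar bstar +
      ∑ t, (lam * ((a t - astar t) - (b t - bstar t)) ^ 2 +
        rho / 2 * ((a t - astar t) ^ 2 + (b t - bstar t) ^ 2)) := by
    rw [hG, hG, ← Finset.sum_add_distrib]
    refine Finset.sum_congr rfl fun t _ => ?_
    exact key_pt lam rho (x t) (z t) (a t) (b t) hden
  rw [hsum]
  have hpos : 0 < ∑ t, (lam * ((a t - astar t) - (b t - bstar t)) ^ 2 +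
      rho / 2 * ((a t - astar t) ^ 2 + (b t - bstar t) ^ 2)) := by
    have hnn : ∀ t ∈ Finset.univ, (0:ℝ) ≤ lam * ((a t - astar t) - (b t - bstar t)) ^ 2 +
        rho / 2 * ((a t - astar t) ^ 2 + (b t - bstar t) ^ 2) := fun t _ => by positivity
    have hex : ∃ t ∈ Finset.univ, (0:ℝ) < lam * ((a t - astar t) - (b t - bstar t)) ^ 2 +
        rho / 2 * ((a t - astar t) ^ 2 + (b t - bstar t) ^ 2) := by
      have : a ≠ astar ∨ b ≠ bstar := by
        by_contra h
        push_neg at h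
        exact hne (by rw [h.1, h.2])
      rcases this with h | h
      · obtain ⟨t, ht⟩ := Function.ne_iff.mp h
        refine ⟨t, Finset.mem_univ t, ?_⟩
        have : a t - astar t ≠ 0 := sub_ne_zero.mpr ht
        positivity
      · obtain ⟨t, ht⟩ := Function.ne_iff.mp h
        refine ⟨t, Finset.mem_univ t, ?_⟩
        have : b t - bstar t ≠ 0 := sub_ne_zero.mpr ht
        positivity
    exact Finset.sum_pos' hnn hex
  linarith

end Paper
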